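/- Define, for y ∈ [0,1) and t ≥ 0, the random variable y_C^{(N)}(y,t) = y + (1/N) Σ_{i=1}^N χ_{τ_i^{(N)} ≤ t} χ_{y_{i,0}^{(N)} ≥ y} and the deterministic function y_C(y,t) = 1 − ∫_y^1 ∫_{[0,∞)} e^{−wt} μ_{z,0}(dw) dz. Then for every t ≥ 0, lim_{N→∞} sup_{y∈[0,1)} E[ ( y_C(y,t) − y_C^{(N)}(y,t) )² ] = 0; that is, y_C^{(N)}(y,t) converges to y_C(y,t) in L², uniformly in y. -/

import Mathlib

open MeasureTheory ProbabilityTheory Filter Topology Real Set NNReal BoundedContinuousFunction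

noncomputable section



lemma my_flip {N : ℕ} (v : Fin N → ℝ) (y0 : Fin N → ℝ) (hinj : Function.Injective y0)
    (hv : ∀ i, |v i| ≤ 1) (y : ℝ) :
    |(∑ i, v i * (if y ≤ y0 i then 1 else 0)) -
      ((∑ i, v i) - ∑ i, v i * (if y0 i ≤ y then 1 else 0))| ≤ 1 := by
  have key : (∑ i, v i * (if y ≤ y0 i then 1 else 0)) -
      ((∑ i, v i) - ∑ i, v i * (if y0 i ≤ y then 1 else 0))
      = ∑ i, v i * (if y0 i = y then 1 else 0) := by
    rw [← Finset.sum_sub_distrib, ← Finset.sum_sub_distrib]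
    apply Finset.sum_congr rfl
    intro i _
    rcases lt_trichotomy (y0 i) y with h | h | h
    · simp [not_le.mpr h, h.le, h.ne]
    · simp [h]
    · simp [h.le, not_le.mpr h, h.ne']
  rw [key]
  calc |∑ i, v i * (if y0 i = y then 1 else 0)|
      ≤ ∑ i, |v i * (if y0 i = y then 1 else 0)| := Finset.abs_sum_le_sum_abs _ _
    _ ≤ ∑ i, (if y0 i = y then (1:ℝ) else 0) := by
        apply Finset.sum_le_sum
        intro i _
        by_cases h : y0 i = y <;> simp [h, abs_mul, hv i]
    _ = ((Finset.univ.filter (fun i => y0 i = y)).card : ℝ) := by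
        rw [Finset.sum_boole]
    _ ≤ 1 := by
        norm_cast
        apply Finset.card_le_one.mpr
        intro a ha b hb
        simp only [Finset.mem_filter] at ha hb
        exact hinj (ha.2.trans hb.2.symm)

lemma my_perm {N : ℕ} (x0 : Fin N → ℕ) (hx0 : ∀ k ∈ Finset.Icc 1 N, ∃! i : Fin N, x0 i = k) :
    Function.Injective x0 ∧ ∀ i, x0 i ∈ Finset.Icc 1 N := by
  classical
  set ψ : ↥(Finset.Icc 1 N) → Fin N := fun k => (hx0 k.1 k.2).choose with hψ
  have hψval : ∀ k, x0 (ψ k) = k.1 := fun k => (hx0 k.1 k.2).choose_spec.1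
  have hψinj : Function.Injective ψ := by
    intro k k' h
    apply Subtype.ext
    rw [← hψval k, ← hψval k', h]
  have hcard : Fintype.card ↥(Finset.Icc 1 N) = Fintype.card (Fin N) := by
    simp [Fintype.card_coe, Nat.card_Icc]
  have hψbij : Function.Bijective ψ :=
    (Fintype.bijective_iff_injective_and_card ψ).mpr ⟨hψinj, hcard⟩
  have hmem : ∀ i, x0 i ∈ Finset.Icc 1 N := by
    intro i
    obtain ⟨k, hk⟩ := hψbij.2 i
    rw [← hk, hψval]; exact k.2
  refine ⟨?_, hmem⟩
  intro i j hij
  exact (hx0 (x0 j) (hmem j)).unique hij rfl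


lemma my_second_moment {Ω : Type} [MeasureSpace Ω] [IsProbabilityMeasure (ℙ : Measure Ω)]
    {N : ℕ} (J : Fin N → Ω → ℝ) (q : Fin N → ℝ)
    (hmeas : ∀ i, Measurable (J i))
    (hbdd : ∀ i ω, J i ω = 0 ∨ J i ω = 1)
    (hq : ∀ i, ∫ ω, J i ω ∂(ℙ : Measure Ω) = q i)
    (hind : ∀ i j, i ≠ j → ∫ ω, J i ω * J j ω ∂(ℙ : Measure Ω) = q i * q j)
    (a : ℝ) :
    ∫ ω, (a - (N:ℝ)⁻¹ * ∑ i, J i ω)^2 ∂(ℙ : Measure Ω)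
      = (a - (N:ℝ)⁻¹ * ∑ i, q i)^2 + ((N:ℝ)⁻¹)^2 * ∑ i, (q i - (q i)^2) := by
  classical
  have hJint : ∀ i, Integrable (J i) (ℙ : Measure Ω) := by
    intro i
    refine (integrable_const (1:ℝ)).mono' (hmeas i).aestronglyMeasurable ?_
    filter_upwards with ω
    rcases hbdd i ω with h | h <;> simp [h]
  have hJJint : ∀ i j, Integrable (fun ω => J i ω * J j ω) (ℙ : Measure Ω) := by
    intro i j
    refine (integrable_const (1:ℝ)).mono' ((hmeas i).mul (hmeas j)).aestronglyMeasurable ?_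
    filter_upwards with ω
    rcases hbdd i ω with h | h <;> rcases hbdd j ω with h' | h' <;> simp [h, h']
  have hJJ : ∀ i j, ∫ ω, J i ω * J j ω ∂(ℙ : Measure Ω)
      = q i * q j + (if i = j then q i - (q i)^2 else 0) := by
    intro i j
    by_cases h : i = j
    · subst h
      have : (fun ω => J i ω * J i ω) = J i := by
        funext ω; rcases hbdd i ω with h | h <;> simp [h]
      rw [this, hq i]
      simp; ring
    · rw [hind i j h]; simp [h]
  set c := (N:ℝ)⁻¹
  -- expand the square
  have hexp : ∀ ω, (a - c * ∑ i, J i ω)^2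
      = a^2 - (2*a*c) * (∑ i, J i ω) + c^2 * (∑ i, ∑ j, J i ω * J j ω) := by
    intro ω
    rw [← Finset.sum_mul_sum]
    ring
  have hSint : Integrable (fun ω => ∑ i, J i ω) (ℙ : Measure Ω) :=
    integrable_finset_sum _ (fun i _ => hJint i)
  have hS2int : Integrable (fun ω => ∑ i, ∑ j, J i ω * J j ω) (ℙ : Measure Ω) :=
    integrable_finset_sum _ (fun i _ => integrable_finset_sum _ (fun j _ => hJJint i j))
  have hS : ∫ ω, (∑ i, J i ω) ∂(ℙ : Measure Ω) = ∑ i, q i := by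
    rw [integral_finset_sum _ (fun i _ => hJint i)]
    exact Finset.sum_congr rfl (fun i _ => hq i)
  have hS2 : ∫ ω, (∑ i, ∑ j, J i ω * J j ω) ∂(ℙ : Measure Ω)
      = (∑ i, q i)^2 + ∑ i, (q i - (q i)^2) := by
    rw [integral_finset_sum _ (fun i _ => integrable_finset_sum _ (fun j _ => hJJint i j))]
    have : ∀ i ∈ Finset.univ, ∫ ω, (∑ j, J i ω * J j ω) ∂(ℙ : Measure Ω)
        = ∑ j, (q i * q j + (if i = j then q i - (q i)^2 else 0)) := by
      intro i _
      rw [integral_finset_sum _ (fun j _ => hJJint i j)]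
      exact Finset.sum_congr rfl (fun j _ => hJJ i j)
    rw [Finset.sum_congr rfl this]
    simp only [Finset.sum_add_distrib, Finset.sum_ite_eq, Finset.mem_univ, if_true]
    rw [← Finset.sum_mul_sum]
    ring_nf
  calc ∫ ω, (a - c * ∑ i, J i ω)^2 ∂(ℙ : Measure Ω)
      = ∫ ω, (a^2 - (2*a*c) * (∑ i, J i ω) + c^2 * (∑ i, ∑ j, J i ω * J j ω)) ∂(ℙ : Measure Ω) := by
        apply integral_congr_ae
        filter_upwards with ω
        exact hexp ω
    _ = a^2 - (2*a*c) * (∑ i, q i) + c^2 * ((∑ i, q i)^2 + ∑ i, (q i - (q i)^2)) := by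
        have hA : Integrable (fun ω => a^2 - (2*a*c) * (∑ i, J i ω)) (ℙ : Measure Ω) :=
          (integrable_const _).sub (hSint.const_mul _)
        have hB : Integrable (fun ω => c^2 * ∑ i, ∑ j, J i ω * J j ω) (ℙ : Measure Ω) :=
          hS2int.const_mul _
        rw [integral_add hA hB, integral_sub (integrable_const (a^2)) (hSint.const_mul (2*a*c)),
          integral_const_mul, integral_const_mul, hS, hS2]
        simp
    _ = (a - c * ∑ i, q i)^2 + c^2 * ∑ i, (q i - (q i)^2) := by ring


def expBCF (t : ℝ) (ht : 0 ≤ t) : ℝ≥0 →ᵇ ℝ :=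
  ⟨⟨fun x => rexp (-(x : ℝ) * t), by continuity⟩, 2, fun x y => by
    have h1 : ∀ s : ℝ≥0, rexp (-(s : ℝ) * t) ≤ 1 := fun s =>
      Real.exp_le_one_iff.mpr (by nlinarith [s.coe_nonneg])
    have h2 : ∀ s : ℝ≥0, 0 < rexp (-(s : ℝ) * t) := fun s => Real.exp_pos _
    rw [Real.dist_eq, abs_le]
    constructor <;> nlinarith [h1 x, h1 y, h2 x, h2 y]⟩

lemma expBCF_apply (t : ℝ) (ht : 0 ≤ t) (x : ℝ≥0) : expBCF t ht x = rexp (-(x : ℝ) * t) := rfl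

lemma my_intInt (f : ℝ → ℝ) (hm : AEMeasurable f volume) (hb : ∀ x, |f x| ≤ 1) (a b : ℝ) :
    IntervalIntegrable f volume a b := by
  rw [intervalIntegrable_iff]
  refine Integrable.mono'
    (((integrableOn_const_iff (by simp)).mpr (Or.inr measure_Ioc_lt_top)) :
      IntegrableOn (fun _ => (1:ℝ)) (Set.uIoc a b) volume)
    hm.aestronglyMeasurable.restrict ?_
  exact ae_of_all _ fun x => by simpa using hb x

lemma my_le_ciSup {α : Sort*} [Nonempty α] (f : α → ℝ) (C : ℝ) (h : ∀ a, f a ≤ C) (a : α) :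
    f a ≤ ⨆ b, f b :=
  le_ciSup ⟨C, by rintro _ ⟨b, rfl⟩; exact h b⟩ a

lemma my_indicator_integral {Ω : Type} [MeasureSpace Ω] [IsProbabilityMeasure (ℙ : Measure Ω)]
    (X : Ω → ℝ) (hX : Measurable X) (t p : ℝ) (hp : 0 ≤ p)
    (hd : (ℙ : Measure Ω) {ω | X ω ≤ t} = ENNReal.ofReal p) :
    ∫ ω, (if X ω ≤ t then (1:ℝ) else 0) ∂(ℙ : Measure Ω) = p := by
  have h1 : (fun ω => if X ω ≤ t then (1:ℝ) else 0)
      = Set.indicator (X ⁻¹' Iic t) (1 : Ω → ℝ) := by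
    funext ω
    by_cases h : X ω ≤ t <;>
      simp [Set.indicator_apply, Set.mem_preimage, Set.mem_Iic, h]
  rw [h1]
  rw [MeasureTheory.integral_indicator_one (hX measurableSet_Iic)]
  have : X ⁻¹' Iic t = {ω | X ω ≤ t} := rfl
  rw [measureReal_def, this, hd, ENNReal.toReal_ofReal hp]


lemma my_indic_meas {Ω : Type} [MeasurableSpace Ω] (X : Ω → ℝ) (hX : Measurable X) (t : ℝ) :
    Measurable (fun ω => if X ω ≤ t then (1:ℝ) else 0) := by
  have hφ : Measurable (fun x : ℝ => if x ≤ t then (1:ℝ) else 0) :=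
    Measurable.ite measurableSet_Iic measurable_const measurable_const
  exact hφ.comp hX

lemma my_indep_prod {Ω : Type} [MeasureSpace Ω] [IsProbabilityMeasure (ℙ : Measure Ω)]
    (X Y : Ω → ℝ) (hX : Measurable X) (hY : Measurable Y)
    (hind : IndepFun X Y (ℙ : Measure Ω)) (t : ℝ) :
    ∫ ω, (if X ω ≤ t then (1:ℝ) else 0) * (if Y ω ≤ t then (1:ℝ) else 0) ∂(ℙ : Measure Ω)
      = (∫ ω, (if X ω ≤ t then (1:ℝ) else 0) ∂(ℙ : Measure Ω))
        * ∫ ω, (if Y ω ≤ t then (1:ℝ) else 0) ∂(ℙ : Measure Ω) := by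
  have hφ : Measurable (fun x : ℝ => if x ≤ t then (1:ℝ) else 0) :=
    Measurable.ite measurableSet_Iic measurable_const measurable_const
  have hind2 : IndepFun (fun ω => if X ω ≤ t then (1:ℝ) else 0)
      (fun ω => if Y ω ≤ t then (1:ℝ) else 0) (ℙ : Measure Ω) := hind.comp hφ hφ
  have hintX : Integrable (fun ω => if X ω ≤ t then (1:ℝ) else 0) (ℙ : Measure Ω) := by
    refine (integrable_const (1:ℝ)).mono' (my_indic_meas X hX t).aestronglyMeasurable ?_
    filter_upwards with ω
    by_cases h : X ω ≤ t <;> simp [h]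
  have hintY : Integrable (fun ω => if Y ω ≤ t then (1:ℝ) else 0) (ℙ : Measure Ω) := by
    refine (integrable_const (1:ℝ)).mono' (my_indic_meas Y hY t).aestronglyMeasurable ?_
    filter_upwards with ω
    by_cases h : Y ω ≤ t <;> simp [h]
  exact hind2.integral_mul_eq_mul_integral hintX.aestronglyMeasurable hintY.aestronglyMeasurable

lemma my_bias {N : ℕ} (hN : 1 ≤ N) (e : Fin N → ℝ) (y0f : Fin N → ℝ)
    (hinj : Function.Injective y0f) (he0 : ∀ i, 0 ≤ e i) (he1 : ∀ i, e i ≤ 1)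
    (y Fy F1 E1N E2N : ℝ)
    (hS1 : |(N:ℝ)⁻¹ * (∑ i, (if y0f i ≤ y then (1:ℝ) else 0)) - y| ≤ E1N)
    (hS2 : |(N:ℝ)⁻¹ * (∑ i, e i * (if y0f i ≤ y then (1:ℝ) else 0)) - Fy| ≤ E2N)
    (hc : |(N:ℝ)⁻¹ * (∑ i, e i) - F1| ≤ E2N + 1/N) :
    |((1 - (F1 - Fy)) - y) - (N:ℝ)⁻¹ * ∑ i, (1 - e i) * (if y ≤ y0f i then (1:ℝ) else 0)|
      ≤ E1N + 2*E2N + 2/N := by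
  have hNR : (1:ℝ) ≤ (N:ℝ) := by exact_mod_cast hN
  have hNpos : (0:ℝ) < (N:ℝ) := by linarith
  have hNne : (N:ℝ) ≠ 0 := ne_of_gt hNpos
  have hinv : (0:ℝ) ≤ (N:ℝ)⁻¹ := inv_nonneg.mpr hNpos.le
  have hflip := my_flip (fun i => 1 - e i) y0f hinj
    (fun i => by
      show |1 - e i| ≤ 1
      rw [abs_le]
      constructor <;> [linarith [he1 i]; linarith [he0 i]]) y
  have hsum1 : (∑ i : Fin N, ((1:ℝ) - e i)) = (N:ℝ) - ∑ i, e i := by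
    rw [Finset.sum_sub_distrib]
    simp
  have hsum2 : (∑ i : Fin N, ((1:ℝ) - e i) * (if y0f i ≤ y then (1:ℝ) else 0))
      = (∑ i, (if y0f i ≤ y then (1:ℝ) else 0)) - ∑ i, e i * (if y0f i ≤ y then (1:ℝ) else 0) := by
    rw [← Finset.sum_sub_distrib]
    apply Finset.sum_congr rfl
    intro i _
    ring
  rw [hsum1, hsum2] at hflip
  set Q := ∑ i : Fin N, ((1:ℝ) - e i) * (if y ≤ y0f i then (1:ℝ) else 0) with hQ
  set A := ∑ i : Fin N, (if y0f i ≤ y then (1:ℝ) else 0) with hA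
  set B := ∑ i : Fin N, e i * (if y0f i ≤ y then (1:ℝ) else 0) with hB
  set C := ∑ i : Fin N, e i with hC
  have h5 : |(N:ℝ)⁻¹ * Q - (1 - (N:ℝ)⁻¹*C - (N:ℝ)⁻¹*A + (N:ℝ)⁻¹*B)| ≤ 1/N := by
    have hid : (N:ℝ)⁻¹ * Q - (1 - (N:ℝ)⁻¹*C - (N:ℝ)⁻¹*A + (N:ℝ)⁻¹*B)
        = (N:ℝ)⁻¹ * (Q - (((N:ℝ) - C) - (A - B))) := by
      field_simp
      ring
    rw [hid, abs_mul, abs_of_nonneg hinv]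
    calc (N:ℝ)⁻¹ * |Q - (((N:ℝ) - C) - (A - B))| ≤ (N:ℝ)⁻¹ * 1 :=
          mul_le_mul_of_nonneg_left hflip hinv
      _ = 1/N := by rw [mul_one, one_div]
  have h1 := abs_le.mp hS1
  have h2 := abs_le.mp hS2
  have h3 := abs_le.mp hc
  have h4 := abs_le.mp h5
  have hdivN : (0:ℝ) < 1/N := by positivity
  have h2n : 2/(N:ℝ) = 1/N + 1/N := by ring
  rw [h2n]
  apply abs_le.mpr
  constructor <;> linarith

lemma expBCF_coe (t : ℝ) (ht : 0 ≤ t) :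
    ⇑(expBCF t ht) = fun x : ℝ≥0 => rexp (-(x : ℝ) * t) := rfl

/-- `y_C^{(N)}(y,t)` converges to `y_C(y,t)` in `L²`, uniformly in
`y ∈ [0,1)`: `lim_N sup_y E[(y_C(y,t) - y_C^{(N)}(y,t))²] = 0`. -/
theorem stmt12
    (Ω : Type) [MeasureSpace Ω] [IsProbabilityMeasure (ℙ : Measure Ω)]
    (w : (N : ℕ) → Fin N → ℝ≥0) (hw : ∀ N i, 0 < w N i)
    (τ : (N : ℕ) → Fin N → Ω → ℝ)
    (hτmeas : ∀ N i, Measurable (τ N i))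
    (hτindep : ∀ N, iIndepFun (τ N) ℙ)
    (hτdist : ∀ N i (t : ℝ), 0 ≤ t →
      (ℙ : Measure Ω) {ω | τ N i ω ≤ t} = ENNReal.ofReal (1 - rexp (-(w N i : ℝ) * t)))
    (x0 : (N : ℕ) → Fin N → ℕ)
    (hx0 : ∀ N, ∀ k ∈ Finset.Icc 1 N, ∃! i : Fin N, x0 N i = k)
    (y0 : (N : ℕ) → Fin N → ℝ)
    (hy0 : ∀ N i, y0 N i = ((x0 N i : ℝ) - 1) / N)
    (μ0 : ℝ → Measure ℝ≥0) (hμ0 : ∀ z, IsProbabilityMeasure (μ0 z))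
    (hμ0meas : ∀ g : ℝ≥0 →ᵇ ℝ, AEMeasurable (fun z => ∫ x, g x ∂(μ0 z)) volume)
    (hinit : ∀ g : ℝ≥0 →ᵇ ℝ,
      Tendsto (fun N : ℕ => ⨆ y : Ico (0 : ℝ) 1,
        |(N : ℝ)⁻¹ * (∑ i : Fin N, g (w N i) * (if y0 N i ≤ (y : ℝ) then (1 : ℝ) else 0))
          - ∫ z in (0 : ℝ)..(y : ℝ), ∫ x, g x ∂(μ0 z)|) atTop (𝓝 0))
    (t : ℝ) (ht : 0 ≤ t) :
    Tendsto (fun N : ℕ => ⨆ y : Ico (0 : ℝ) 1,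
      ∫ ω, ((1 - ∫ z in (y : ℝ)..1, ∫ x, rexp (-(x : ℝ) * t) ∂(μ0 z))
          - ((y : ℝ) + (N : ℝ)⁻¹ * ∑ i : Fin N,
              (if τ N i ω ≤ t then (1 : ℝ) else 0)
                * (if (y : ℝ) ≤ y0 N i then (1 : ℝ) else 0))) ^ 2 ∂(ℙ : Measure Ω))
      atTop (𝓝 0) := by
  classical
  haveI hne : Nonempty ↥(Ico (0:ℝ) 1) := ⟨⟨0, by norm_num⟩⟩
  have hexple : ∀ x : ℝ≥0, rexp (-(x : ℝ) * t) ≤ 1 := fun x =>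
    Real.exp_le_one_iff.mpr (by nlinarith [x.coe_nonneg])
  set f : ℝ → ℝ := fun z => ∫ x, rexp (-(x : ℝ) * t) ∂(μ0 z) with hfdef
  have hfbd : ∀ z, |f z| ≤ 1 := by
    intro z
    haveI := hμ0 z
    have h := MeasureTheory.norm_integral_le_of_norm_le_const
      (μ := μ0 z) (f := fun x : ℝ≥0 => rexp (-(x : ℝ) * t)) (C := 1)
      (ae_of_all _ fun x => by
        rw [Real.norm_eq_abs, abs_of_pos (Real.exp_pos _)]; exact hexple x)
    rw [Real.norm_eq_abs, probReal_univ, mul_one] at h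
    exact h
  have hfmeas : AEMeasurable f volume := hμ0meas (expBCF t ht)
  have hfint : ∀ a b : ℝ, IntervalIntegrable f volume a b := my_intInt f hfmeas hfbd
  have hadj : ∀ y : ℝ, (∫ z in y..(1:ℝ), f z)
      = (∫ z in (0:ℝ)..(1:ℝ), f z) - ∫ z in (0:ℝ)..y, f z := by
    intro y
    have h := intervalIntegral.integral_add_adjacent_intervals (hfint 0 y) (hfint y 1)
    linarith
  -- ε₂ from hinit applied to expBCF
  have hε2 : Tendsto (fun N : ℕ => ⨆ y : Ico (0:ℝ) 1,
      |(N:ℝ)⁻¹ * (∑ i : Fin N, rexp (-(w N i : ℝ) * t) * (if y0 N i ≤ (y:ℝ) then (1:ℝ) else 0))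
        - ∫ z in (0:ℝ)..(y:ℝ), f z|) atTop (𝓝 0) := by
    have h := hinit (expBCF t ht)
    simpa only [expBCF_coe, hfdef] using h
  -- ε₁ from hinit applied to 1
  have hε1 : Tendsto (fun N : ℕ => ⨆ y : Ico (0:ℝ) 1,
      |(N:ℝ)⁻¹ * (∑ i : Fin N, (if y0 N i ≤ (y:ℝ) then (1:ℝ) else 0)) - (y:ℝ)|)
      atTop (𝓝 0) := by
    have h := hinit 1
    have h1 : ∀ z : ℝ, (∫ _x : ℝ≥0, (1:ℝ) ∂(μ0 z)) = (1:ℝ) := fun z => by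
      haveI := hμ0 z; simp
    simp only [BoundedContinuousFunction.coe_one, Pi.one_apply, one_mul, h1,
      intervalIntegral.integral_const, smul_eq_mul, mul_one, sub_zero] at h
    exact h

  -- permutation facts
  have hperm : ∀ N : ℕ, Function.Injective (x0 N) ∧ ∀ i, x0 N i ∈ Finset.Icc 1 N :=
    fun N => my_perm (x0 N) (hx0 N)
  have hx0le : ∀ (N : ℕ) (i : Fin N), (x0 N i : ℝ) ≤ N := by
    intro N i
    have h := (hperm N).2 i
    rw [Finset.mem_Icc] at h
    exact_mod_cast h.2
  have hy0inj : ∀ N : ℕ, 1 ≤ N → Function.Injective (y0 N) := by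
    intro N hN i j hij
    have hNne : (N:ℝ) ≠ 0 := Nat.cast_ne_zero.mpr (by omega)
    rw [hy0 N i, hy0 N j] at hij
    have h2 := congrArg (fun r : ℝ => r * N) hij
    simp only [div_mul_cancel₀ _ hNne] at h2
    have h3 : (x0 N i : ℝ) = (x0 N j : ℝ) := by linarith
    exact (hperm N).1 (by exact_mod_cast h3)
  -- name the sup sequences
  set E1 : ℕ → ℝ := fun N : ℕ => ⨆ y : Ico (0:ℝ) 1,
      |(N:ℝ)⁻¹ * (∑ i : Fin N, (if y0 N i ≤ (y:ℝ) then (1:ℝ) else 0)) - (y:ℝ)| with hE1def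
  set E2 : ℕ → ℝ := fun N : ℕ => ⨆ y : Ico (0:ℝ) 1,
      |(N:ℝ)⁻¹ * (∑ i : Fin N, rexp (-(w N i : ℝ) * t) * (if y0 N i ≤ (y:ℝ) then (1:ℝ) else 0))
        - ∫ z in (0:ℝ)..(y:ℝ), f z| with hE2def
  -- generic bounds
  have hsumbd : ∀ (N : ℕ) (g : Fin N → ℝ), (∀ i, |g i| ≤ 1) →
      ∀ y' : ℝ, |(N:ℝ)⁻¹ * ∑ i, g i * (if y0 N i ≤ y' then (1:ℝ) else 0)| ≤ 1 := by
    intro N g hg y'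
    rw [abs_mul, abs_of_nonneg (inv_nonneg.mpr (Nat.cast_nonneg N))]
    have h1 : |∑ i : Fin N, g i * (if y0 N i ≤ y' then (1:ℝ) else 0)| ≤ (N:ℝ) := by
      calc |∑ i : Fin N, g i * (if y0 N i ≤ y' then (1:ℝ) else 0)|
          ≤ ∑ i : Fin N, |g i * (if y0 N i ≤ y' then (1:ℝ) else 0)| :=
            Finset.abs_sum_le_sum_abs _ _
        _ ≤ ∑ _i : Fin N, (1:ℝ) := by
            apply Finset.sum_le_sum
            intro i _
            by_cases h : y0 N i ≤ y'
            · simpa [h] using hg i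
            · simp [h]
        _ = (N:ℝ) := by simp
    have h2 : (N:ℝ)⁻¹ * (N:ℝ) ≤ 1 := by
      rcases eq_or_ne (N:ℝ) 0 with h | h
      · simp [h]
      · rw [inv_mul_cancel₀ h]
    calc (N:ℝ)⁻¹ * |∑ i : Fin N, g i * (if y0 N i ≤ y' then (1:ℝ) else 0)|
        ≤ (N:ℝ)⁻¹ * (N:ℝ) :=
          mul_le_mul_of_nonneg_left h1 (inv_nonneg.mpr (Nat.cast_nonneg N))
      _ ≤ 1 := h2
  have hFbd2 : ∀ u v : ℝ, |∫ z in u..v, f z| ≤ |v - u| := by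
    intro u v
    have h := intervalIntegral.norm_integral_le_of_norm_le_const (C := 1)
      (f := f) (a := u) (b := v) (fun x _ => by rw [Real.norm_eq_abs]; exact hfbd x)
    rw [Real.norm_eq_abs] at h
    linarith
  -- pointwise control from the sups
  have hE1pt : ∀ (N : ℕ) (y : Ico (0:ℝ) 1),
      |(N:ℝ)⁻¹ * (∑ i : Fin N, (if y0 N i ≤ (y:ℝ) then (1:ℝ) else 0)) - (y:ℝ)| ≤ E1 N := by
    intro N y
    refine my_le_ciSup (fun y' : ↥(Ico (0:ℝ) 1) =>
      |(N:ℝ)⁻¹ * (∑ i : Fin N, (if y0 N i ≤ (y':ℝ) then (1:ℝ) else 0)) - (y':ℝ)|) 2 ?_ y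
    intro y'
    have h1 : |(N:ℝ)⁻¹ * ∑ i : Fin N, (if y0 N i ≤ (y':ℝ) then (1:ℝ) else 0)| ≤ 1 := by
      have := hsumbd N (fun _ => 1) (fun i => by norm_num) (y':ℝ)
      simpa using this
    have h2 : |(y':ℝ)| ≤ 1 := by
      rw [abs_of_nonneg y'.2.1]
      linarith [y'.2.2]
    calc |(N:ℝ)⁻¹ * (∑ i : Fin N, (if y0 N i ≤ (y':ℝ) then (1:ℝ) else 0)) - (y':ℝ)|
        ≤ |(N:ℝ)⁻¹ * (∑ i : Fin N, (if y0 N i ≤ (y':ℝ) then (1:ℝ) else 0))| + |(y':ℝ)| :=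
          abs_sub _ _
      _ ≤ 2 := by linarith
  have hE2pt : ∀ (N : ℕ) (y : Ico (0:ℝ) 1),
      |(N:ℝ)⁻¹ * (∑ i : Fin N, rexp (-(w N i : ℝ) * t) * (if y0 N i ≤ (y:ℝ) then (1:ℝ) else 0))
        - ∫ z in (0:ℝ)..(y:ℝ), f z| ≤ E2 N := by
    intro N y
    refine my_le_ciSup (fun y' : ↥(Ico (0:ℝ) 1) =>
      |(N:ℝ)⁻¹ * (∑ i : Fin N, rexp (-(w N i : ℝ) * t) * (if y0 N i ≤ (y':ℝ) then (1:ℝ) else 0))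
        - ∫ z in (0:ℝ)..(y':ℝ), f z|) 2 ?_ y
    intro y'
    have h1 : |(N:ℝ)⁻¹ * ∑ i : Fin N, rexp (-(w N i : ℝ) * t)
        * (if y0 N i ≤ (y':ℝ) then (1:ℝ) else 0)| ≤ 1 := by
      refine hsumbd N _ (fun i => ?_) (y':ℝ)
      rw [abs_of_pos (Real.exp_pos _)]
      exact hexple (w N i)
    have h2 : |∫ z in (0:ℝ)..(y':ℝ), f z| ≤ 1 := by
      have h := hFbd2 0 (y':ℝ)
      have h3 : |(y':ℝ) - 0| ≤ 1 := by
        rw [sub_zero, abs_of_nonneg y'.2.1]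
        linarith [y'.2.2]
      linarith
    calc |(N:ℝ)⁻¹ * (∑ i : Fin N, rexp (-(w N i : ℝ) * t)
          * (if y0 N i ≤ (y':ℝ) then (1:ℝ) else 0)) - ∫ z in (0:ℝ)..(y':ℝ), f z|
        ≤ |(N:ℝ)⁻¹ * (∑ i : Fin N, rexp (-(w N i : ℝ) * t)
          * (if y0 N i ≤ (y':ℝ) then (1:ℝ) else 0))| + |∫ z in (0:ℝ)..(y':ℝ), f z| :=
          abs_sub _ _
      _ ≤ 2 := by linarith
  -- control of the mean exponential
  have hcN : ∀ N : ℕ, 1 ≤ N →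
      |(N:ℝ)⁻¹ * (∑ i : Fin N, rexp (-(w N i : ℝ) * t)) - ∫ z in (0:ℝ)..(1:ℝ), f z|
        ≤ E2 N + 1/N := by
    intro N hN
    have hNR : (1:ℝ) ≤ (N:ℝ) := by exact_mod_cast hN
    have hNpos : (0:ℝ) < (N:ℝ) := by linarith
    have hys0 : (0:ℝ) ≤ ((N:ℝ)-1)/N := div_nonneg (by linarith) hNpos.le
    have hys1 : ((N:ℝ)-1)/N < 1 := by
      rw [div_lt_one hNpos]; linarith
    have h1 : |(N:ℝ)⁻¹ * (∑ i : Fin N, rexp (-(w N i : ℝ) * t)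
        * (if y0 N i ≤ ((N:ℝ)-1)/N then (1:ℝ) else 0))
        - ∫ z in (0:ℝ)..(((N:ℝ)-1)/N), f z| ≤ E2 N :=
      hE2pt N ⟨((N:ℝ)-1)/N, hys0, hys1⟩
    have hall : (∑ i : Fin N, rexp (-(w N i : ℝ) * t)
        * (if y0 N i ≤ ((N:ℝ)-1)/N then (1:ℝ) else 0))
        = ∑ i : Fin N, rexp (-(w N i : ℝ) * t) := by
      apply Finset.sum_congr rfl
      intro i _
      rw [if_pos, mul_one]
      rw [hy0 N i]
      exact (div_le_div_iff_of_pos_right hNpos).mpr (by linarith [hx0le N i])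
    rw [hall] at h1
    have h2 : |(∫ z in (0:ℝ)..(((N:ℝ)-1)/N), f z) - ∫ z in (0:ℝ)..(1:ℝ), f z| ≤ 1/N := by
      have h3 := hadj (((N:ℝ)-1)/N)
      have h4 := hFbd2 (((N:ℝ)-1)/N) 1
      have h5 : |1 - ((N:ℝ)-1)/N| = 1/N := by
        rw [abs_of_nonneg (by linarith)]
        field_simp
        ring
      rw [show (∫ z in (0:ℝ)..(((N:ℝ)-1)/N), f z) - ∫ z in (0:ℝ)..(1:ℝ), f z
        = -(∫ z in (((N:ℝ)-1)/N)..(1:ℝ), f z) from by linarith, abs_neg]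
      rw [h5] at h4
      exact h4
    have ha := abs_le.mp h1
    have hb := abs_le.mp h2
    apply abs_le.mpr
    constructor <;> linarith
  -- the key quantitative bound
  have key : ∀ N : ℕ, 1 ≤ N → ∀ y : Ico (0:ℝ) 1,
      (∫ ω, ((1 - ∫ z in (y:ℝ)..1, f z)
          - ((y:ℝ) + (N:ℝ)⁻¹ * ∑ i : Fin N,
              (if τ N i ω ≤ t then (1:ℝ) else 0)
                * (if (y:ℝ) ≤ y0 N i then (1:ℝ) else 0))) ^ 2 ∂(ℙ : Measure Ω))
        ≤ (E1 N + 2 * E2 N + 2/(N:ℝ))^2 + 1/(4*(N:ℝ)) := by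
    intro N hN y
    have hNR : (1:ℝ) ≤ (N:ℝ) := by exact_mod_cast hN
    have hNpos : (0:ℝ) < (N:ℝ) := by linarith
    have hNne : (N:ℝ) ≠ 0 := ne_of_gt hNpos
    have hpnn : ∀ i : Fin N, 0 ≤ 1 - rexp (-(w N i : ℝ) * t) := fun i => by
      linarith [hexple (w N i)]
    have hJmeas : ∀ i : Fin N, Measurable (fun ω =>
        (if τ N i ω ≤ t then (1:ℝ) else 0) * (if (y:ℝ) ≤ y0 N i then (1:ℝ) else 0)) :=
      fun i => (my_indic_meas (τ N i) (hτmeas N i) t).mul_const _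
    have hJbdd : ∀ (i : Fin N) (ω : Ω),
        (if τ N i ω ≤ t then (1:ℝ) else 0) * (if (y:ℝ) ≤ y0 N i then (1:ℝ) else 0) = 0 ∨
        (if τ N i ω ≤ t then (1:ℝ) else 0) * (if (y:ℝ) ≤ y0 N i then (1:ℝ) else 0) = 1 := by
      intro i ω
      by_cases h1 : τ N i ω ≤ t <;> by_cases h2 : (y:ℝ) ≤ y0 N i <;> simp [h1, h2]
    have hIexp : ∀ i : Fin N, ∫ ω, (if τ N i ω ≤ t then (1:ℝ) else 0) ∂(ℙ : Measure Ω)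
        = 1 - rexp (-(w N i : ℝ) * t) := fun i =>
      my_indicator_integral (τ N i) (hτmeas N i) t _ (hpnn i) (hτdist N i t ht)
    have hJq : ∀ i : Fin N, ∫ ω, (if τ N i ω ≤ t then (1:ℝ) else 0)
        * (if (y:ℝ) ≤ y0 N i then (1:ℝ) else 0) ∂(ℙ : Measure Ω)
        = (1 - rexp (-(w N i : ℝ) * t)) * (if (y:ℝ) ≤ y0 N i then (1:ℝ) else 0) := by
      intro i
      rw [MeasureTheory.integral_mul_const, hIexp i]
    have hJind : ∀ i j : Fin N, i ≠ j →
        ∫ ω, ((if τ N i ω ≤ t then (1:ℝ) else 0) * (if (y:ℝ) ≤ y0 N i then (1:ℝ) else 0))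
          * ((if τ N j ω ≤ t then (1:ℝ) else 0) * (if (y:ℝ) ≤ y0 N j then (1:ℝ) else 0))
          ∂(ℙ : Measure Ω)
        = ((1 - rexp (-(w N i : ℝ) * t)) * (if (y:ℝ) ≤ y0 N i then (1:ℝ) else 0))
          * ((1 - rexp (-(w N j : ℝ) * t)) * (if (y:ℝ) ≤ y0 N j then (1:ℝ) else 0)) := by
      intro i j hij
      have hre : (fun ω => ((if τ N i ω ≤ t then (1:ℝ) else 0)
            * (if (y:ℝ) ≤ y0 N i then (1:ℝ) else 0))
          * ((if τ N j ω ≤ t then (1:ℝ) else 0) * (if (y:ℝ) ≤ y0 N j then (1:ℝ) else 0)))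
          = (fun ω => ((if τ N i ω ≤ t then (1:ℝ) else 0) * (if τ N j ω ≤ t then (1:ℝ) else 0))
            * ((if (y:ℝ) ≤ y0 N i then (1:ℝ) else 0)
              * (if (y:ℝ) ≤ y0 N j then (1:ℝ) else 0))) := by
        funext ω; ring
      rw [hre, MeasureTheory.integral_mul_const,
        my_indep_prod (τ N i) (τ N j) (hτmeas N i) (hτmeas N j) ((hτindep N).indepFun hij) t,
        hIexp i, hIexp j]
      ring
    have heq := my_second_moment
      (fun i ω => (if τ N i ω ≤ t then (1:ℝ) else 0) * (if (y:ℝ) ≤ y0 N i then (1:ℝ) else 0))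
      (fun i => (1 - rexp (-(w N i : ℝ) * t)) * (if (y:ℝ) ≤ y0 N i then (1:ℝ) else 0))
      hJmeas hJbdd hJq hJind ((1 - ∫ z in (y:ℝ)..1, f z) - (y:ℝ))
    have hbias : |((1 - ∫ z in (y:ℝ)..1, f z) - (y:ℝ)) - (N:ℝ)⁻¹ * ∑ i : Fin N,
        (1 - rexp (-(w N i : ℝ) * t)) * (if (y:ℝ) ≤ y0 N i then (1:ℝ) else 0)|
        ≤ E1 N + 2 * E2 N + 2/(N:ℝ) := by
      rw [hadj (y:ℝ)]
      exact my_bias hN (fun i => rexp (-(w N i : ℝ) * t)) (y0 N) (hy0inj N hN)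
        (fun i => (Real.exp_pos _).le) (fun i => hexple (w N i)) (y:ℝ) _ _ _ _
        (hE1pt N y) (hE2pt N y) (hcN N hN)
    have hsq : (((1 - ∫ z in (y:ℝ)..1, f z) - (y:ℝ)) - (N:ℝ)⁻¹ * ∑ i : Fin N,
        (1 - rexp (-(w N i : ℝ) * t)) * (if (y:ℝ) ≤ y0 N i then (1:ℝ) else 0))^2
        ≤ (E1 N + 2 * E2 N + 2/(N:ℝ))^2 := by
      rw [← sq_abs]
      exact pow_le_pow_left₀ (abs_nonneg _) hbias 2
    have hvar : ((N:ℝ)⁻¹)^2 * ∑ i : Fin N,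
        ((1 - rexp (-(w N i : ℝ) * t)) * (if (y:ℝ) ≤ y0 N i then (1:ℝ) else 0)
          - ((1 - rexp (-(w N i : ℝ) * t)) * (if (y:ℝ) ≤ y0 N i then (1:ℝ) else 0))^2)
        ≤ 1/(4*(N:ℝ)) := by
      have hsum4 : (∑ i : Fin N,
          ((1 - rexp (-(w N i : ℝ) * t)) * (if (y:ℝ) ≤ y0 N i then (1:ℝ) else 0)
            - ((1 - rexp (-(w N i : ℝ) * t)) * (if (y:ℝ) ≤ y0 N i then (1:ℝ) else 0))^2))
          ≤ (N:ℝ)/4 := by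
        calc (∑ i : Fin N,
            ((1 - rexp (-(w N i : ℝ) * t)) * (if (y:ℝ) ≤ y0 N i then (1:ℝ) else 0)
              - ((1 - rexp (-(w N i : ℝ) * t)) * (if (y:ℝ) ≤ y0 N i then (1:ℝ) else 0))^2))
            ≤ ∑ _i : Fin N, (1/4 : ℝ) := by
              apply Finset.sum_le_sum
              intro i _
              nlinarith [sq_nonneg ((1 - rexp (-(w N i : ℝ) * t))
                * (if (y:ℝ) ≤ y0 N i then (1:ℝ) else 0) - 1/2)]
          _ = (N:ℝ)/4 := by
              rw [Finset.sum_const, Finset.card_univ, Fintype.card_fin, nsmul_eq_mul]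
              ring
      calc ((N:ℝ)⁻¹)^2 * ∑ i : Fin N,
          ((1 - rexp (-(w N i : ℝ) * t)) * (if (y:ℝ) ≤ y0 N i then (1:ℝ) else 0)
            - ((1 - rexp (-(w N i : ℝ) * t)) * (if (y:ℝ) ≤ y0 N i then (1:ℝ) else 0))^2)
          ≤ ((N:ℝ)⁻¹)^2 * ((N:ℝ)/4) := mul_le_mul_of_nonneg_left hsum4 (by positivity)
        _ = 1/(4*(N:ℝ)) := by
            field_simp
    calc (∫ ω, ((1 - ∫ z in (y:ℝ)..1, f z)
          - ((y:ℝ) + (N:ℝ)⁻¹ * ∑ i : Fin N,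
              (if τ N i ω ≤ t then (1:ℝ) else 0)
                * (if (y:ℝ) ≤ y0 N i then (1:ℝ) else 0))) ^ 2 ∂(ℙ : Measure Ω))
        = ∫ ω, (((1 - ∫ z in (y:ℝ)..1, f z) - (y:ℝ)) - (N:ℝ)⁻¹ * ∑ i : Fin N,
              (if τ N i ω ≤ t then (1:ℝ) else 0)
                * (if (y:ℝ) ≤ y0 N i then (1:ℝ) else 0)) ^ 2 ∂(ℙ : Measure Ω) := by
          apply integral_congr_ae
          filter_upwards with ω
          ring
      _ = (((1 - ∫ z in (y:ℝ)..1, f z) - (y:ℝ)) - (N:ℝ)⁻¹ * ∑ i : Fin N,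
              (1 - rexp (-(w N i : ℝ) * t)) * (if (y:ℝ) ≤ y0 N i then (1:ℝ) else 0))^2
            + ((N:ℝ)⁻¹)^2 * ∑ i : Fin N,
              ((1 - rexp (-(w N i : ℝ) * t)) * (if (y:ℝ) ≤ y0 N i then (1:ℝ) else 0)
                - ((1 - rexp (-(w N i : ℝ) * t)) * (if (y:ℝ) ≤ y0 N i then (1:ℝ) else 0))^2) :=
          heq
      _ ≤ (E1 N + 2 * E2 N + 2/(N:ℝ))^2 + 1/(4*(N:ℝ)) := by
          linarith
  -- conclusion by squeezing
  apply squeeze_zero' (g := fun N : ℕ => (E1 N + 2 * E2 N + 2/(N:ℝ))^2 + 1/(4*(N:ℝ)))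
  · filter_upwards with N
    exact Real.iSup_nonneg fun y => integral_nonneg fun ω => sq_nonneg _
  · filter_upwards [eventually_ge_atTop 1] with N hN
    apply Real.iSup_le (fun y => key N hN y)
    positivity
  · have ha : Tendsto (fun N : ℕ => E1 N + 2 * E2 N + 2/(N:ℝ)) atTop (𝓝 0) := by
      have h := (hε1.add (hε2.const_mul 2)).add (tendsto_const_div_atTop_nhds_zero_nat 2)
      have h0 : ((0:ℝ) + 2*0) + 0 = 0 := by norm_num
      rw [h0] at h
      exact h
    have hb : Tendsto (fun N : ℕ => 1/(4*(N:ℝ))) atTop (𝓝 0) := by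
      have h := tendsto_const_div_atTop_nhds_zero_nat (1/4 : ℝ)
      rw [show (fun N : ℕ => 1/(4*(N:ℝ))) = (fun N : ℕ => (1/4 : ℝ)/(N:ℝ)) from
        funext fun N => (div_div 1 4 (N:ℝ)).symm]
      exact h
    have h := (ha.pow 2).add hb
    have h0 : ((0:ℝ)^2 + 0 : ℝ) = 0 := by norm_num
    rw [h0] at h
    exact h
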